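/- Weierstraß canonical form (Proposition 1, first part): Let D, M ∈ ℂ^{k×k} be such that the pencil sD − M is regular, i.e., there exists s₀ ∈ ℂ with det(s₀ D − M) ≠ 0. Then there exist r ∈ {0, 1, …, k}, invertible matrices P, Q ∈ ℂ^{k×k}, a matrix J ∈ ℂ^{r×r}, and a nilpotent matrix N ∈ ℂ^{(k−r)×(k−r)} such that P D Q equals the block-diagonal matrix with blocks I_r and N, and P M Q equals the block-diagonal matrix with blocks J and I_{k−r}. -/

import Mathlib

open Matrix LinearMap

/-- Block structure of the matrix of an endomorphism preserving both pieces of a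
complementary pair of submodules. -/
lemma toMatrix_isCompl_fromBlocks
    {K : Type*} [Field K] {V : Type*} [AddCommGroup V] [Module K V]
    {p q : Submodule K V} (hcompl : IsCompl p q)
    {f : V →ₗ[K] V} (hp : ∀ x ∈ p, f x ∈ p) (hq : ∀ x ∈ q, f x ∈ q)
    {r s : ℕ} (bp : Module.Basis (Fin r) K p) (bq : Module.Basis (Fin s) K q) :
    LinearMap.toMatrix ((bp.prod bq).map (Submodule.prodEquivOfIsCompl p q hcompl))
      ((bp.prod bq).map (Submodule.prodEquivOfIsCompl p q hcompl)) f
      = Matrix.fromBlocks (LinearMap.toMatrix bp bp (f.restrict hp)) 0 0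
          (LinearMap.toMatrix bq bq (f.restrict hq)) := by
  set e := Submodule.prodEquivOfIsCompl p q hcompl with he
  set b := (bp.prod bq).map e with hb
  have hbl : ∀ j, b (Sum.inl j) = (bp j : V) := by
    intro j
    have h1 : bp.prod bq (Sum.inl j) = (bp j, 0) :=
      Prod.ext (Module.Basis.prod_apply_inl_fst _ _ _) (Module.Basis.prod_apply_inl_snd _ _ _)
    simp [hb, he, Module.Basis.map_apply, h1, Submodule.coe_prodEquivOfIsCompl']
  have hbr : ∀ j, b (Sum.inr j) = (bq j : V) := by
    intro j
    have h1 : bp.prod bq (Sum.inr j) = (0, bq j) :=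
      Prod.ext (Module.Basis.prod_apply_inr_fst _ _ _) (Module.Basis.prod_apply_inr_snd _ _ _)
    simp [hb, he, Module.Basis.map_apply, h1, Submodule.coe_prodEquivOfIsCompl']
  have hreprp : ∀ x : p, b.repr (x : V) = (bp.prod bq).repr (x, 0) := by
    intro x
    simp [hb, he, Module.Basis.map_repr, Submodule.prodEquivOfIsCompl_symm_apply_left]
  have hreprq : ∀ x : q, b.repr (x : V) = (bp.prod bq).repr (0, x) := by
    intro x
    simp [hb, he, Module.Basis.map_repr, Submodule.prodEquivOfIsCompl_symm_apply_right]
  ext i j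
  rcases i with i | i <;> rcases j with j | j
  · rw [LinearMap.toMatrix_apply, hbl j, ← LinearMap.restrict_coe_apply f hp, hreprp,
      Module.Basis.prod_repr_inl]
    simp [Matrix.fromBlocks, LinearMap.toMatrix_apply]
  · rw [LinearMap.toMatrix_apply, hbr j, ← LinearMap.restrict_coe_apply f hq, hreprq,
      Module.Basis.prod_repr_inl]
    simp [Matrix.fromBlocks]
  · rw [LinearMap.toMatrix_apply, hbl j, ← LinearMap.restrict_coe_apply f hp, hreprp,
      Module.Basis.prod_repr_inr]
    simp [Matrix.fromBlocks]
  · rw [LinearMap.toMatrix_apply, hbr j, ← LinearMap.restrict_coe_apply f hq, hreprq,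
      Module.Basis.prod_repr_inr]
    simp [Matrix.fromBlocks, LinearMap.toMatrix_apply]

lemma reindex_mul' {n m : Type*} [Fintype n] [Fintype m] [DecidableEq n] [DecidableEq m]
    (e : n ≃ m) (X Y : Matrix n n ℂ) :
    Matrix.reindex e e X * Matrix.reindex e e Y = Matrix.reindex e e (X * Y) := by
  simp [Matrix.reindex_apply, Matrix.submatrix_mul_equiv]

set_option maxHeartbeats 1000000 in
/-- **Weierstraß canonical form.** If the pencil `s D - M` is regular,
i.e. `det (s₀ • D - M) ≠ 0` for some `s₀ ∈ ℂ`, then there are `r, s` with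
`r + s = k`, invertible `P, Q`, a matrix `J` of size `r` and a nilpotent `N` of
size `s` such that `P D Q = diag(I_r, N)` and `P M Q = diag(J, I_s)`. -/
theorem weierstrass_canonical_form
    {k : ℕ} (D M : Matrix (Fin k) (Fin k) ℂ)
    (hreg : ∃ s₀ : ℂ, (s₀ • D - M).det ≠ 0) :
    ∃ (r s : ℕ) (hrs : r + s = k)
      (P Q : Matrix (Fin k) (Fin k) ℂ)
      (J : Matrix (Fin r) (Fin r) ℂ) (N : Matrix (Fin s) (Fin s) ℂ),
      IsUnit P ∧ IsUnit Q ∧ IsNilpotent N ∧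
      P * D * Q =
        Matrix.reindex (finSumFinEquiv.trans (finCongr hrs))
          (finSumFinEquiv.trans (finCongr hrs))
          (Matrix.fromBlocks (1 : Matrix (Fin r) (Fin r) ℂ) 0 0 N) ∧
      P * M * Q =
        Matrix.reindex (finSumFinEquiv.trans (finCongr hrs))
          (finSumFinEquiv.trans (finCongr hrs))
          (Matrix.fromBlocks J 0 0 (1 : Matrix (Fin s) (Fin s) ℂ)) := by
  classical
  obtain ⟨s₀, hdet⟩ := hreg
  set E : Matrix (Fin k) (Fin k) ℂ := s₀ • D - M with hEdef
  have hEdetu : IsUnit E.det := isUnit_iff_ne_zero.mpr hdet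
  set A : Matrix (Fin k) (Fin k) ℂ := E⁻¹ * D with hAdef
  set std := Pi.basisFun ℂ (Fin k) with hstd
  set f : (Fin k → ℂ) →ₗ[ℂ] (Fin k → ℂ) := Matrix.toLin std std A with hfdef
  obtain ⟨n₀, hn₀⟩ := Filter.eventually_atTop.mp f.eventually_isCompl_ker_pow_range_pow
  set n := n₀ + 1 with hn
  have hcompl : IsCompl (LinearMap.ker (f ^ n)) (LinearMap.range (f ^ n)) :=
    hn₀ n (Nat.le_succ n₀)
  set Rg := LinearMap.range (f ^ n) with hRg
  set Kr := LinearMap.ker (f ^ n) with hKr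
  have hfR : ∀ x ∈ Rg, f x ∈ Rg := by
    rintro x ⟨y, rfl⟩
    refine ⟨f y, ?_⟩
    rw [← Module.End.mul_apply, ← Module.End.mul_apply, pow_mul_comm']
  have hfK : ∀ x ∈ Kr, f x ∈ Kr := by
    intro x hx
    have hx' : (f ^ n) x = 0 := hx
    show (f ^ n) (f x) = 0
    rw [← Module.End.mul_apply, ← pow_succ, pow_succ', Module.End.mul_apply, hx', map_zero]
  set r := Module.finrank ℂ Rg with hr
  set s := Module.finrank ℂ Kr with hs
  have hrs : r + s = k := by
    have h1 := LinearMap.finrank_range_add_finrank_ker (f ^ n)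
    rwa [Module.finrank_fin_fun] at h1
  set bR : Module.Basis (Fin r) ℂ Rg := Module.finBasis ℂ Rg with hbR
  set bK : Module.Basis (Fin s) ℂ Kr := Module.finBasis ℂ Kr with hbK
  set b := (bR.prod bK).map (Submodule.prodEquivOfIsCompl Rg Kr hcompl.symm) with hbdef
  set A₁ := LinearMap.toMatrix bR bR (f.restrict hfR) with hA₁
  set A₀ := LinearMap.toMatrix bK bK (f.restrict hfK) with hA₀
  have hB : LinearMap.toMatrix b b f = Matrix.fromBlocks A₁ 0 0 A₀ :=
    toMatrix_isCompl_fromBlocks hcompl.symm hfR hfK bR bK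
  -- A₀ is nilpotent
  have hA₀nil : IsNilpotent A₀ := by
    refine ⟨n, ?_⟩
    rw [hA₀, LinearMap.toMatrix_pow, Module.End.pow_restrict]
    have hz : (f ^ n).restrict (Module.End.pow_apply_mem_of_forall_mem n hfK) = 0 := by
      ext x
      have hx : (f ^ n) (x : Fin k → ℂ) = 0 := x.2
      simp [LinearMap.restrict_apply, hx]
    rw [hz, LinearEquiv.map_zero]
  -- A₁ is a unit
  have hker : LinearMap.ker f ≤ Kr := by
    rw [hKr, hn, pow_succ]
    exact fun y hy => by
      simp only [LinearMap.mem_ker] at hy ⊢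
      rw [Module.End.mul_apply, hy, map_zero]
  have hfRinj : Function.Injective (f.restrict hfR) := by
    rw [← LinearMap.ker_eq_bot, eq_bot_iff]
    rintro x hx
    have hx' : f (x : Fin k → ℂ) = 0 := by
      have h1 := LinearMap.mem_ker.mp hx
      have h2 := congrArg Subtype.val h1
      simpa [LinearMap.restrict_coe_apply] using h2
    have hxK : (x : Fin k → ℂ) ∈ Kr := hker (LinearMap.mem_ker.mpr hx')
    have hmem : (x : Fin k → ℂ) ∈ Kr ⊓ Rg := ⟨hxK, x.2⟩
    rw [hcompl.inf_eq_bot, Submodule.mem_bot] at hmem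
    rw [Submodule.mem_bot]
    exact Subtype.ext hmem
  have hfRunit : IsUnit (f.restrict hfR) :=
    (Module.End.isUnit_iff _).mpr ⟨hfRinj, LinearMap.injective_iff_surjective.mp hfRinj⟩
  have hA₁unit : IsUnit A₁ := by
    obtain ⟨u, hu⟩ := hfRunit
    refine ⟨⟨A₁, LinearMap.toMatrix bR bR ((u⁻¹ : _) : Module.End ℂ ↥Rg), ?_, ?_⟩, rfl⟩
    · rw [hA₁, ← hu, ← LinearMap.toMatrix_mul, Units.mul_inv, LinearMap.toMatrix_one]
    · rw [hA₁, ← hu, ← LinearMap.toMatrix_mul, Units.inv_mul, LinearMap.toMatrix_one]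
  have hA₁det : IsUnit A₁.det := (Matrix.isUnit_iff_isUnit_det A₁).mp hA₁unit
  -- the unit `s₀ • A₀ - 1`
  set S := s₀ • A₀ - 1 with hSdef
  have hSunit : IsUnit S := (hA₀nil.smul s₀).isUnit_sub_one
  have hSdet : IsUnit S.det := (Matrix.isUnit_iff_isUnit_det S).mp hSunit
  -- change of basis
  set eqv : Fin r ⊕ Fin s ≃ Fin k := finSumFinEquiv.trans (finCongr hrs) with heqv
  set b' := b.reindex eqv with hb'
  set T := std.toMatrix ⇑b' with hT
  have hTinv : Invertible T := std.invertibleToMatrix b'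
  have hTunit : IsUnit T := isUnit_of_invertible T
  have hTdet : IsUnit T.det := (Matrix.isUnit_iff_isUnit_det T).mp hTunit
  have hrein : LinearMap.toMatrix b' b' f =
      Matrix.reindex eqv eqv (LinearMap.toMatrix b b f) := by
    ext i j
    rw [LinearMap.toMatrix_apply, Matrix.reindex_apply, Matrix.submatrix_apply,
      LinearMap.toMatrix_apply, hb', Module.Basis.reindex_apply, Module.Basis.repr_reindex,
      Finsupp.mapDomain_equiv_apply]
  set G := Matrix.reindex eqv eqv (Matrix.fromBlocks A₁ 0 0 A₀) with hG
  have hAT : A * T = T * G := by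
    have h1 : T * LinearMap.toMatrix b' b' f = LinearMap.toMatrix b' std f := by
      rw [hT]; exact basis_toMatrix_mul_linearMap_toMatrix b' std b' f
    have h2 : LinearMap.toMatrix std std f * T = LinearMap.toMatrix b' std f := by
      rw [hT]; exact linearMap_toMatrix_mul_basis_toMatrix b' std std f
    have h3 : LinearMap.toMatrix std std f = A := by
      rw [hfdef, LinearMap.toMatrix_toLin]
    rw [← h3, h2, ← h1, hrein, hB, hG]
  -- definitions of the data
  set N := S⁻¹ * A₀ with hN
  set J : Matrix (Fin r) (Fin r) ℂ := s₀ • 1 - A₁⁻¹ with hJ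
  set W := Matrix.reindex eqv eqv (Matrix.fromBlocks A₁⁻¹ 0 0 S⁻¹) with hW
  set P := W * T⁻¹ * E⁻¹ with hP
  have hNnil : IsNilpotent N := by
    have hc : Commute S⁻¹ A₀ := by
      have hc1 : Commute A₀ S := by
        rw [hSdef]
        exact ((Commute.refl A₀).smul_right s₀).sub_right (Commute.one_right A₀)
      obtain ⟨u, hu⟩ := hSunit
      have : S⁻¹ = ↑u⁻¹ := by rw [← hu, Matrix.coe_units_inv]
      rw [this]
      exact ((Commute.units_inv_right (hu ▸ hc1 : Commute A₀ (u : _)))).symm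
    exact hc.isNilpotent_mul_left hA₀nil
  have hWunit : IsUnit W := by
    rw [Matrix.isUnit_iff_isUnit_det, hW, Matrix.det_reindex_self,
      Matrix.det_fromBlocks_zero₂₁]
    exact (Matrix.isUnit_nonsing_inv_det A₁ hA₁det).mul
      (Matrix.isUnit_nonsing_inv_det S hSdet)
  have hPunit : IsUnit P := by
    rw [hP]
    exact (hWunit.mul ((Matrix.isUnit_iff_isUnit_det _).mpr
        (Matrix.isUnit_nonsing_inv_det T hTdet))).mul
      ((Matrix.isUnit_iff_isUnit_det _).mpr (Matrix.isUnit_nonsing_inv_det E hEdetu))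
  -- the two identities
  have hPDQ : P * D * T = Matrix.reindex eqv eqv (Matrix.fromBlocks 1 0 0 N) := by
    have h1 : P * D * T = W * T⁻¹ * (A * T) := by
      rw [hP, hAdef]
      noncomm_ring
    rw [h1, hAT, ← Matrix.mul_assoc, Matrix.mul_assoc W T⁻¹ T,
      Matrix.nonsing_inv_mul T hTdet, Matrix.mul_one, hW, hG, reindex_mul',
      Matrix.fromBlocks_multiply]
    congr 1
    simp [Matrix.nonsing_inv_mul A₁ hA₁det, hN]
  have hPMQ : P * M * T = Matrix.reindex eqv eqv (Matrix.fromBlocks J 0 0 1) := by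
    have hM : M = s₀ • D - E := by rw [hEdef]; exact (sub_sub_cancel _ _).symm
    have h1 : P * M * T = s₀ • (P * D * T) - W * T⁻¹ * (E⁻¹ * E) * T := by
      rw [hM, hP, Matrix.mul_sub, Matrix.sub_mul]
      congr 1
      · rw [Matrix.mul_smul, Matrix.smul_mul]
      · rw [Matrix.mul_assoc (W * T⁻¹) E⁻¹ E]
    rw [h1, Matrix.nonsing_inv_mul E hEdetu, Matrix.mul_one, Matrix.mul_assoc W T⁻¹ T,
      Matrix.nonsing_inv_mul T hTdet, Matrix.mul_one, hPDQ, hW]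
    have hlast : s₀ • Matrix.reindex eqv eqv (Matrix.fromBlocks 1 0 0 N) -
        Matrix.reindex eqv eqv (Matrix.fromBlocks A₁⁻¹ 0 0 S⁻¹) =
        Matrix.reindex eqv eqv (Matrix.fromBlocks (s₀ • 1 - A₁⁻¹) 0 0 (s₀ • N - S⁻¹)) := by
      ext i j
      simp [Matrix.reindex_apply, Matrix.submatrix_apply]
      rcases (eqv.symm i) with i' | i' <;> rcases (eqv.symm j) with j' | j' <;>
        simp [Matrix.fromBlocks]
    rw [hlast]
    have hone : s₀ • N - S⁻¹ = 1 := by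
      have hsm : s₀ • N = S⁻¹ * (s₀ • A₀) := by rw [hN, Matrix.mul_smul]
      calc s₀ • N - S⁻¹ = S⁻¹ * (s₀ • A₀) - S⁻¹ * 1 := by rw [hsm, Matrix.mul_one]
        _ = S⁻¹ * (s₀ • A₀ - 1) := by rw [Matrix.mul_sub]
        _ = 1 := by rw [← hSdef, Matrix.nonsing_inv_mul S hSdet]
    rw [hone, hJ]
  exact ⟨r, s, hrs, P, T, J, N, hPunit, hTunit, hNnil, hPDQ, hPMQ⟩
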